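/- Let K, d : M → ℝ be positive functions on a compact Riemannian 2-sphere (M, g) with d constant, such that ∫_M K dA = 4π (Gauss–Bonnet), dA' = √d dA defines the area element of a second metric with Gauss curvature K' satisfying ∫_M K' dA' = 4π, and 2K' ≥ 2K/√d pointwise. Then K' · √d = K everywhere and 2K' = K²/d everywhere (given also the pointwise chain 2K' ≥ K²/d ≥ 2K/√d). -/

import Mathlib

open MeasureTheory

/-- Let `K, d` be positive data on a compact Riemannian 2-sphere `(M,g)`
(encoded via its area measure `μ`, of full support) with `d` constant, such that
`∫ K dμ = 4π` (Gauss–Bonnet), `dA' = √d·dμ` is the area element of a second metric with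
Gauss curvature `K'` satisfying `∫ K' dA' = 4π`, and pointwise
`2K' ≥ K²/d ≥ 2K/√d`. Then `K'·√d = K` and `2K' = K²/d` everywhere. -/
theorem stmt13 {M : Type*} [TopologicalSpace M] [CompactSpace M]
    [MeasurableSpace M] [BorelSpace M]
    (μ : Measure M) [IsFiniteMeasure μ] [μ.IsOpenPosMeasure]
    (K K' : M → ℝ) (d : ℝ) (hd : 0 < d)
    (hKc : Continuous K) (hK'c : Continuous K')
    (hKpos : ∀ p, 0 < K p)
    (hGB : ∫ p, K p ∂μ = 4 * Real.pi)
    (hGB' : ∫ p, K' p * Real.sqrt d ∂μ = 4 * Real.pi)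
    (hchain : ∀ p, 2 * K' p ≥ (K p) ^ 2 / d ∧ (K p) ^ 2 / d ≥ 2 * K p / Real.sqrt d) :
    ∀ p, K' p * Real.sqrt d = K p ∧ 2 * K' p = (K p) ^ 2 / d := by
  have hsd : 0 < Real.sqrt d := Real.sqrt_pos.mpr hd
  -- pointwise K'√d ≥ K
  have hge : ∀ p, K p ≤ K' p * Real.sqrt d := by
    intro p
    obtain ⟨h1, h2⟩ := hchain p
    have h3 : 2 * K p / Real.sqrt d ≤ 2 * K' p := le_trans h2 h1
    have := (div_le_iff₀ hsd).mp h3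
    nlinarith
  set f : M → ℝ := fun p => K' p * Real.sqrt d - K p with hf
  have hfc : Continuous f := (hK'c.mul continuous_const).sub hKc
  have hfi : Integrable f μ := hfc.integrable_of_hasCompactSupport
    (HasCompactSupport.of_compactSpace _)
  have hint : ∫ p, f p ∂μ = 0 := by
    show ∫ p, (K' p * Real.sqrt d - K p) ∂μ = 0
    rw [integral_sub (Continuous.integrable_of_hasCompactSupport (f := fun p => K' p * Real.sqrt d) (hK'c.mul continuous_const)
      (HasCompactSupport.of_compactSpace _))
      (hKc.integrable_of_hasCompactSupport (HasCompactSupport.of_compactSpace _)),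
      hGB, hGB']
    ring
  have hae : f =ᵐ[μ] 0 := by
    have := (integral_eq_zero_iff_of_nonneg (fun p => sub_nonneg.mpr (hge p)) hfi).mp hint
    exact this
  have heq : f = 0 := (hfc.ae_eq_iff_eq μ continuous_const).mp hae
  intro p
  have h0 : K' p * Real.sqrt d = K p := by
    have := congrFun heq p
    simp only [hf, Pi.zero_apply] at this
    linarith
  refine ⟨h0, ?_⟩
  obtain ⟨h1, h2⟩ := hchain p
  have h3 : 2 * K' p = 2 * K p / Real.sqrt d := by
    field_simp
    nlinarith
  linarith [h3 ▸ h2, h1]
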